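/- Let R ≥ 1, T ≥ 1, and set C = 4√(cosh R + 2)/√(cosh R). Suppose r ≥ C cosh T and d₁ ≤ (C cosh T)^{−1}. Then for every s ∈ ℝ with r/(4 cosh T) ≤ e^s ≤ 4 r cosh T one has d₁² e^{4s} + 2(a² + r² − 2(cosh R)² r²) e^{2s} + d₂² ≤ 0; equivalently, every such point γ₂(s) lies within hyperbolic distance R of the z-axis {(0,0,e^t) : t ∈ ℝ}. -/

import Mathlib

open Real

noncomputable section

/-- Inverse hyperbolic cosine. -/
def arcosh (x : ℝ) : ℝ := Real.log (x + Real.sqrt (x ^ 2 - 1))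

/-- Hyperbolic distance in the upper half-space model of `H³`. -/
def rho (p q : ℝ × ℝ × ℝ) : ℝ :=
  _root_.arcosh (1 +
    ((q.1 - p.1) ^ 2 + (q.2.1 - p.2.1) ^ 2 + (q.2.2 - p.2.2) ^ 2) / (2 * p.2.2 * q.2.2))

/-- The half-circle geodesic `γ₂`. -/
def gamma2 (a r β s : ℝ) : ℝ × ℝ × ℝ :=
  (a + r * Real.cos β * (1 - Real.exp (2 * s)) / (1 + Real.exp (2 * s)),
   r * Real.sin β * (1 - Real.exp (2 * s)) / (1 + Real.exp (2 * s)),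
   2 * r * Real.exp s / (1 + Real.exp (2 * s)))

/-- `d₁ = √(a² + r² − 2ar cos β)`. -/
def d1 (a r β : ℝ) : ℝ := Real.sqrt (a ^ 2 + r ^ 2 - 2 * a * r * Real.cos β)

/-- `d₂ = √(a² + r² + 2ar cos β)`. -/
def d2 (a r β : ℝ) : ℝ := Real.sqrt (a ^ 2 + r ^ 2 + 2 * a * r * Real.cos β)

/-- A convex quadratic that is nonpositive at two points is nonpositive in between. -/
lemma my_quad_nonpos (A B C x y z : ℝ) (hA : 0 ≤ A)
    (h1 : A*x^2+B*x+C ≤ 0) (h2 : A*z^2+B*z+C ≤ 0)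
    (hxy : x ≤ y) (hyz : y ≤ z) : A*y^2+B*y+C ≤ 0 := by
  rcases eq_or_lt_of_le (hxy.trans hyz) with h | h
  · have hx : x = y := le_antisymm hxy (by linarith)
    rw [← hx]; exact h1
  · have key : (z - x) * (A*y^2+B*y+C) ≤ (z - x) * 0 := by
      rw [mul_zero]
      nlinarith [mul_nonpos_of_nonneg_of_nonpos (sub_nonneg.2 hyz) h1,
        mul_nonpos_of_nonneg_of_nonpos (sub_nonneg.2 hxy) h2,
        mul_nonneg hA (mul_nonneg (mul_nonneg (sub_nonneg.2 hxy) (sub_nonneg.2 hyz)) (sub_nonneg.2 h.le))]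
    exact le_of_mul_le_mul_left key (by linarith)

lemma my_sq_le' (N kz : ℝ) (hN : 0 ≤ N) (hkz : 0 ≤ kz) (h : N^2 ≤ kz^2) : N ≤ kz := by
  nlinarith

lemma my_arcosh_nonneg (x : ℝ) (hx : 1 ≤ x) : 0 ≤ _root_.arcosh x := by
  unfold _root_.arcosh
  apply Real.log_nonneg
  nlinarith [Real.sqrt_nonneg (x ^ 2 - 1)]

lemma my_arcosh_le (x R : ℝ) (hx : 1 ≤ x) (hR : 0 ≤ R) (h : x ≤ Real.cosh R) :
    _root_.arcosh x ≤ R := by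
  unfold _root_.arcosh
  have hs : Real.sqrt (x ^ 2 - 1) ≤ Real.sinh R := by
    have h1 : Real.sinh R = Real.sqrt (Real.cosh R ^ 2 - 1) := by
      rw [show Real.cosh R ^ 2 - 1 = Real.sinh R ^ 2 by rw [Real.cosh_sq]; ring,
        Real.sqrt_sq (Real.sinh_nonneg_iff.2 hR)]
    rw [h1]
    apply Real.sqrt_le_sqrt
    nlinarith [Real.one_le_cosh R]
  have hpos : 0 < x + Real.sqrt (x ^ 2 - 1) := by positivity
  rw [Real.log_le_iff_le_exp hpos, ← Real.cosh_add_sinh]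
  linarith

lemma my_cosh_ge (T : ℝ) (hT : 1 ≤ T) : (3/2 : ℝ) ≤ Real.cosh T := by
  have h1 : Real.cosh 1 ≤ Real.cosh T := by
    rw [Real.cosh_le_cosh, abs_of_nonneg (by norm_num), abs_of_nonneg (by linarith)]; exact hT
  have h2 : (3/2:ℝ) ≤ Real.cosh 1 := by
    rw [Real.cosh_eq]
    have e1 := Real.exp_one_gt_d9
    have e2 := Real.exp_one_lt_d9
    have he : Real.exp (-1) = (Real.exp 1)⁻¹ := by rw [Real.exp_neg]
    rw [he]
    have hpos : (0:ℝ) < Real.exp 1 := Real.exp_pos 1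
    have h3 : (2.7182818286:ℝ)⁻¹ ≤ (Real.exp 1)⁻¹ := by
      apply inv_anti₀ hpos (le_of_lt e2)
    nlinarith
  linarith

set_option maxHeartbeats 2000000 in
lemma my_endpoint_plus (a r c u h k : ℝ) (ha : 0 ≤ a) (hc0 : 0 ≤ c) (hc1 : c ≤ 1) (hu0 : 0 ≤ u)
    (hk32 : (3:ℝ)/2 ≤ k) (hh32 : (3:ℝ)/2 ≤ h)
    (hu1 : 16*h^2*u^2 ≤ 1) (hr4h : 4*h ≤ r) (hr6 : 6 ≤ r) (ha16 : a ≤ r + 1/6) :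
    u^2*(16*r^2*h^2)^2 + 2*(a^2+r^2-2*k^2*r^2)*(16*r^2*h^2) + (a^2+r^2+2*a*r*c) ≤ 0 := by
  have hr0 : (0:ℝ) < r := by linarith
  have hh0 : (0:ℝ) < h := by linarith
  have F1 : 256*u^2*r^4*h^4 ≤ 16*r^4*h^2 := by
    nlinarith [mul_le_mul_of_nonneg_right hu1 (show (0:ℝ) ≤ 16*r^4*h^2 by positivity)]
  have F2 : a^2 ≤ r^2 + r/3 + 1/36 := by nlinarith
  have F3 : 32*r^2*h^2*a^2 ≤ 32*r^2*h^2*(r^2 + r/3 + 1/36) :=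
    mul_le_mul_of_nonneg_left F2 (by positivity)
  have F4 : r^3*h^2 ≤ (1/6)*(r^4*h^2) := by
    nlinarith [mul_le_mul_of_nonneg_right hr6 (show (0:ℝ) ≤ r^3*h^2 by positivity)]
  have F5 : r^2*h^2 ≤ (1/36)*(r^4*h^2) := by
    nlinarith [mul_le_mul_of_nonneg_right (mul_le_mul hr6 hr6 (by norm_num) hr0.le)
      (show (0:ℝ) ≤ r^2*h^2 by positivity)]
  have F6 : 2*a*r*c ≤ 2*r^2 + r/3 := by
    nlinarith [mul_le_mul_of_nonneg_right ha16 hr0.le, mul_nonneg ha hr0.le,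
      mul_le_mul_of_nonneg_left hc1 (mul_nonneg ha hr0.le)]
  have F7 : (9/4)*(r^4*h^2) ≤ k^2*(r^4*h^2) := by
    have hk0 : (0:ℝ) ≤ k := by linarith
    have : (9/4:ℝ) ≤ k^2 := by nlinarith
    exact mul_le_mul_of_nonneg_right this (by positivity)
  have F9 : r^2 ≤ (1/36)*(r^4*h^2) := by
    nlinarith [F5, sq_nonneg r,
      mul_le_mul_of_nonneg_right (show (1:ℝ) ≤ h^2 by nlinarith) (sq_nonneg r)]
  have F8 : a^2+r^2+2*a*r*c ≤ 5*r^2 := by nlinarith [F2, F6]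
  nlinarith [F1, F3, F4, F5, F7, F8, F9]

set_option maxHeartbeats 2000000 in
lemma my_endpoint_minus (a r c u h k : ℝ) (ha : 0 ≤ a) (hc0 : 0 ≤ c) (hc1 : c ≤ 1) (hu0 : 0 ≤ u)
    (hk32 : (3:ℝ)/2 ≤ k) (hh32 : (3:ℝ)/2 ≤ h)
    (hu1 : 16*h^2*u^2 ≤ 1) (hr4h : 4*h ≤ r) (hr6 : 6 ≤ r) (ha16 : a ≤ r + 1/6) :
    u^2*r^4 + 2*(a^2+r^2-2*k^2*r^2)*(16*h^2*r^2) + 256*h^4*(a^2+r^2+2*a*r*c) ≤ 0 := by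
  have hr0 : (0:ℝ) < r := by linarith
  have hh0 : (0:ℝ) < h := by linarith
  have F2 : a^2 ≤ r^2 + r/3 + 1/36 := by nlinarith
  have F3 : 32*r^2*h^2*a^2 ≤ 32*r^2*h^2*(r^2 + r/3 + 1/36) :=
    mul_le_mul_of_nonneg_left F2 (by positivity)
  have F4 : r^3*h^2 ≤ (1/6)*(r^4*h^2) := by
    nlinarith [mul_le_mul_of_nonneg_right hr6 (show (0:ℝ) ≤ r^3*h^2 by positivity)]
  have F5 : r^2*h^2 ≤ (1/36)*(r^4*h^2) := by
    nlinarith [mul_le_mul_of_nonneg_right (mul_le_mul hr6 hr6 (by norm_num) hr0.le)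
      (show (0:ℝ) ≤ r^2*h^2 by positivity)]
  have F6 : 2*a*r*c ≤ 2*r^2 + r/3 := by
    nlinarith [mul_le_mul_of_nonneg_right ha16 hr0.le, mul_nonneg ha hr0.le,
      mul_le_mul_of_nonneg_left hc1 (mul_nonneg ha hr0.le)]
  have F7 : (9/4)*(r^4*h^2) ≤ k^2*(r^4*h^2) := by
    have hk0 : (0:ℝ) ≤ k := by linarith
    have : (9/4:ℝ) ≤ k^2 := by nlinarith
    exact mul_le_mul_of_nonneg_right this (by positivity)
  have Ha : 16*h^2 ≤ r^2 := by nlinarith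
  have G1 : u^2*r^4 ≤ (4/9)*(r^4*h^2) := by
    nlinarith [mul_le_mul_of_nonneg_right hu1 (show (0:ℝ) ≤ r^4 by positivity),
      mul_nonneg (mul_nonneg (sq_nonneg u) (show (0:ℝ) ≤ r^4 by positivity))
        (show (0:ℝ) ≤ 16*h^2 - 1 by nlinarith),
      mul_le_mul_of_nonneg_right (show (9/4:ℝ) ≤ h^2 by nlinarith)
        (show (0:ℝ) ≤ r^4 by positivity)]
  have G2 : h^4*r^2 ≤ (1/16)*(r^4*h^2) := by
    nlinarith [mul_le_mul_of_nonneg_right Ha (show (0:ℝ) ≤ h^2*r^2/16 by positivity)]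
  have G3 : h^4*r ≤ (1/96)*(r^4*h^2) := by
    nlinarith [mul_le_mul_of_nonneg_right Ha (show (0:ℝ) ≤ h^2*r/16 by positivity), F4]
  have G4 : h^4 ≤ (1/576)*(r^4*h^2) := by
    nlinarith [mul_le_mul_of_nonneg_right Ha (show (0:ℝ) ≤ h^2/16 by positivity), F5]
  have G5 : 256*h^4*(2*a*r*c) ≤ 256*h^4*(2*r^2+r/3) := mul_le_mul_of_nonneg_left F6 (by positivity)
  have G6 : 256*h^4*a^2 ≤ 256*h^4*(r^2+r/3+1/36) := mul_le_mul_of_nonneg_left F2 (by positivity)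
  nlinarith [F3, F4, F5, F7, G1, G2, G3, G4, G5, G6]

set_option maxHeartbeats 4000000 in
/-- If `r` is large and `d₁` is small, then the whole relevant segment of `γ₂` lies
in the tube of radius `R` about the `z`-axis (the claim (4.4)/(4.12) of the paper). -/
theorem gamma2_segment_in_tube (a r β R T : ℝ) (ha : 0 ≤ a) (hr : 0 < r)
    (hβ : β ∈ Set.Ioc 0 (π / 2)) (hR : 1 ≤ R) (hT : 1 ≤ T)
    (hrbig : 4 * Real.sqrt (Real.cosh R + 2) / Real.sqrt (Real.cosh R) * Real.cosh T ≤ r)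
    (hd1small : d1 a r β ≤
      (4 * Real.sqrt (Real.cosh R + 2) / Real.sqrt (Real.cosh R) * Real.cosh T)⁻¹) :
    ∀ s : ℝ, r / (4 * Real.cosh T) ≤ Real.exp s → Real.exp s ≤ 4 * r * Real.cosh T →
      d1 a r β ^ 2 * Real.exp (4 * s) +
          2 * (a ^ 2 + r ^ 2 - 2 * Real.cosh R ^ 2 * r ^ 2) * Real.exp (2 * s) +
          d2 a r β ^ 2 ≤ 0 ∧
      (⨅ t : ℝ, rho (gamma2 a r β s) (0, 0, Real.exp t)) ≤ R := by
  intro s hs1 hs2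
  obtain ⟨hβ0, hβ2⟩ := hβ
  set k := Real.cosh R with hkdef
  set h := Real.cosh T with hhdef
  have hk32 : (3/2:ℝ) ≤ k := my_cosh_ge R hR
  have hh32 : (3/2:ℝ) ≤ h := my_cosh_ge T hT
  have hk0 : (0:ℝ) < k := by linarith
  have hh0 : (0:ℝ) < h := by linarith
  set c := Real.cos β with hcdef
  have hc0 : 0 ≤ c := Real.cos_nonneg_of_mem_Icc
    ⟨by linarith [Real.pi_pos], hβ2⟩
  have hc1 : c ≤ 1 := Real.cos_le_one β
  set u := d1 a r β with hudef
  have hu0 : 0 ≤ u := Real.sqrt_nonneg _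
  have husq : u^2 = a^2 + r^2 - 2*a*r*c := Real.sq_sqrt (by
    nlinarith [mul_nonneg (mul_nonneg ha hr.le) (sub_nonneg.2 (Real.cos_le_one β)),
      sq_nonneg (a - r)])
  have hd2sq : d2 a r β ^ 2 = a^2 + r^2 + 2*a*r*c := Real.sq_sqrt (by
    nlinarith [mul_nonneg (mul_nonneg ha hr.le) (show (0:ℝ) ≤ Real.cos β from hc0),
      sq_nonneg a, sq_nonneg r])
  set C := 4 * Real.sqrt (k+2) / Real.sqrt k with hCdef
  have hC0 : (0:ℝ) < C := by
    apply div_pos (by positivity) (Real.sqrt_pos.2 hk0)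
  have hC2 : C^2 * k = 16*(k+2) := by
    rw [hCdef, div_pow, mul_pow, Real.sq_sqrt (by linarith : (0:ℝ) ≤ k+2),
      Real.sq_sqrt hk0.le]
    field_simp
    norm_num
  -- key polynomial hypotheses
  have hint1 : u * (C*h) ≤ 1 := by
    have := mul_le_mul_of_nonneg_right hd1small (le_of_lt (by positivity : (0:ℝ) < C*h))
    rwa [inv_mul_cancel₀ (by positivity)] at this
  have Hu : 16*(k+2)*h^2*u^2 ≤ k := by
    have hsq : (u*(C*h))^2 ≤ 1 := by nlinarith [mul_nonneg hu0 (by positivity : (0:ℝ) ≤ C*h)]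
    have := mul_le_mul_of_nonneg_right hsq hk0.le
    calc 16*(k+2)*h^2*u^2 = (C^2*k)*h^2*u^2 := by rw [hC2]
    _ = (u*(C*h))^2 * k := by ring
    _ ≤ 1 * k := this
    _ = k := by ring
  have Hr : 16*(k+2)*h^2 ≤ k*r^2 := by
    have hsq : (C*h)^2 ≤ r^2 := by nlinarith [hrbig, mul_pos hC0 hh0]
    have := mul_le_mul_of_nonneg_right hsq hk0.le
    calc 16*(k+2)*h^2 = (C^2*k)*h^2 := by rw [hC2]
    _ = (C*h)^2 * k := by ring
    _ ≤ r^2 * k := this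
    _ = k*r^2 := by ring
  have hu1 : 16*h^2*u^2 ≤ 1 := by nlinarith [Hu, sq_nonneg (h*u)]
  have hu4 : 4*h*u ≤ 1 := by nlinarith [hu1, mul_nonneg hh0.le hu0]
  have hu6 : 6*u ≤ 1 := by nlinarith [hu4, hu0]
  have h16 : 16*h^2 ≤ r^2 := by nlinarith [Hr, hk0, sq_nonneg h]
  have hr4h : 4*h ≤ r := by nlinarith [h16, show (0:ℝ) < 4*h + r by linarith]
  have h36 : 36 ≤ r^2 := by
    nlinarith [Hr, hk0, mul_nonneg (show (0:ℝ) ≤ k+2 by linarith)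
      (show (0:ℝ) ≤ h^2-9/4 by nlinarith [hh32])]
  have hr6 : 6 ≤ r := by nlinarith [h36, show (0:ℝ) < r + 6 by linarith]
  have hsqle : (a - r*c)^2 ≤ u^2 := by
    nlinarith [husq, mul_nonneg (mul_nonneg (sub_nonneg.2 hc1)
      (by linarith : (0:ℝ) ≤ 1 + c)) (sq_nonneg r)]
  have hac : a ≤ r*c + u := by
    nlinarith [hsqle, hu0, sq_nonneg (a - r*c + u), sq_nonneg (a - r*c - u)]
  have ha16 : a ≤ r + 1/6 := by nlinarith [hac, mul_le_mul_of_nonneg_left hc1 hr.le]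
  -- exponential setup
  set E := Real.exp s with hEdef
  have hE0 : (0:ℝ) < E := Real.exp_pos s
  have hE2 : Real.exp (2*s) = E^2 := by
    rw [two_mul, Real.exp_add]; ring
  have hE4 : Real.exp (4*s) = (E^2)^2 := by
    rw [show (4:ℝ)*s = (2*s) + (2*s) by ring, Real.exp_add, hE2]; ring
  have hx : (r/(4*h))^2 ≤ E^2 := by
    apply pow_le_pow_left₀ (by positivity) hs1
  have hz : E^2 ≤ 16*r^2*h^2 := by
    calc E^2 ≤ (4*r*h)^2 := pow_le_pow_left₀ hE0.le hs2 2
    _ = 16*r^2*h^2 := by ring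
  -- endpoint inequalities
  have hplus := my_endpoint_plus a r c u h k ha hc0 hc1 hu0 hk32 hh32 hu1 hr4h hr6 ha16
  have hminusQ := my_endpoint_minus a r c u h k ha hc0 hc1 hu0 hk32 hh32 hu1 hr4h hr6 ha16
  have hminus : u^2*((r/(4*h))^2)^2 + (2*(a^2+r^2-2*k^2*r^2))*((r/(4*h))^2)
      + (a^2+r^2+2*a*r*c) ≤ 0 := by
    have hexp : u^2*((r/(4*h))^2)^2 + (2*(a^2+r^2-2*k^2*r^2))*((r/(4*h))^2)
        + (a^2+r^2+2*a*r*c)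
        = (u^2*r^4 + 2*(a^2+r^2-2*k^2*r^2)*(16*h^2*r^2) + 256*h^4*(a^2+r^2+2*a*r*c))
          / (256*h^4) := by
      field_simp
      ring
    rw [hexp]
    exact div_nonpos_of_nonpos_of_nonneg hminusQ (by positivity)
  have hmain : u^2*(E^2)^2 + (2*(a^2+r^2-2*k^2*r^2))*(E^2) + (a^2+r^2+2*a*r*c) ≤ 0 := by
    have := my_quad_nonpos (u^2) (2*(a^2+r^2-2*k^2*r^2)) (a^2+r^2+2*a*r*c)
      ((r/(4*h))^2) (E^2) (16*r^2*h^2) (sq_nonneg u)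
      (by linarith [hminus]) (by linarith [hplus]) hx hz
    linarith [this]
  have goal1 : u ^ 2 * Real.exp (4 * s) +
      2 * (a ^ 2 + r ^ 2 - 2 * k ^ 2 * r ^ 2) * Real.exp (2 * s) + d2 a r β ^ 2 ≤ 0 := by
    rw [hE4, hE2, hd2sq]; linarith [hmain]
  refine ⟨goal1, ?_⟩
  clear hplus hminusQ hminus goal1 hx hz hu1 hu4 hu6 h16 h36 Hu Hr hint1 hd1small hrbig
  clear hC2 hC0 hCdef hsqle hac ha16 hr4h hr6 hu0 hd2sq hs1 hs2
  -- second part: distance to the axis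
  have hF0 : (0:ℝ) < 1 + E^2 := by positivity
  obtain ⟨x, hxdef⟩ : ∃ x : ℝ, x = a + r*c*(1-E^2)/(1+E^2) := ⟨_, rfl⟩
  obtain ⟨y, hydef⟩ : ∃ y : ℝ, y = r*Real.sin β*(1-E^2)/(1+E^2) := ⟨_, rfl⟩
  obtain ⟨z, hzdef⟩ : ∃ z : ℝ, z = 2*r*E/(1+E^2) := ⟨_, rfl⟩
  have hgam : gamma2 a r β s = (x, y, z) := by
    rw [gamma2, hE2, hxdef, hydef, hzdef]
  have hz0 : (0:ℝ) < z := by rw [hzdef]; positivity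
  have hσ : Real.sin β ^ 2 = 1 - c^2 := by
    have := Real.sin_sq_add_cos_sq β
    rw [hcdef]; linarith
  have hxyz0 : (0:ℝ) < x^2+y^2+z^2 := by
    nlinarith [sq_nonneg x, sq_nonneg y, mul_pos hz0 hz0]
  obtain ⟨N, hNdef⟩ : ∃ N : ℝ, N = Real.sqrt (x^2+y^2+z^2) := ⟨_, rfl⟩
  have hN2 : N^2 = x^2+y^2+z^2 := by rw [hNdef]; exact Real.sq_sqrt hxyz0.le
  have hN0 : (0:ℝ) < N := by rw [hNdef]; exact Real.sqrt_pos.2 hxyz0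
  have keyN : N^2 ≤ k^2*z^2 := by
    have hxF : x*(1+E^2) = a*(1+E^2) + r*c*(1-E^2) := by
      rw [hxdef]; field_simp
    have hyF : y*(1+E^2) = r*Real.sin β*(1-E^2) := by
      rw [hydef]; field_simp
    have hzF : z*(1+E^2) = 2*r*E := by
      rw [hzdef]; field_simp
    have hiden : (a*(1+E^2)+r*c*(1-E^2))^2 + (r*Real.sin β*(1-E^2))^2 + (2*r*E)^2
        = (u^2*(E^2)^2 + (2*(a^2+r^2-2*k^2*r^2))*(E^2) + (a^2+r^2+2*a*r*c))
          + k^2*(2*r*E)^2 := by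
      linear_combination (r*(1-E^2))^2 * hσ - (E^2)^2 * husq
    have step : (x*(1+E^2))^2 + (y*(1+E^2))^2 + (z*(1+E^2))^2 ≤ k^2*(z*(1+E^2))^2 := by
      rw [hxF, hyF, hzF, hiden]
      have : k^2*(2*r*E)^2 = k^2*((2*r*E)^2) := by ring
      linarith [hmain]
    have step2 : N^2 * (1+E^2)^2 ≤ (k^2*z^2) * (1+E^2)^2 := by
      rw [hN2]; linarith [step]
    exact le_of_mul_le_mul_right step2 (by positivity)
  clear hmain husq hσ
  have hNz : N ≤ k*z := by
    refine my_sq_le' N (k*z) hN0.le (mul_nonneg hk0.le hz0.le) ?_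
    nlinarith [keyN]
  have hzN : z ≤ N := by
    refine my_sq_le' z N hz0.le hN0.le ?_
    nlinarith [hN2, sq_nonneg x, sq_nonneg y]
  -- the infimum is at most the value at t = log N
  have hbdd : BddBelow (Set.range fun t => rho (gamma2 a r β s) (0, 0, Real.exp t)) := by
    refine ⟨0, ?_⟩
    rintro w ⟨t, rfl⟩
    rw [hgam]
    apply my_arcosh_nonneg
    have : 0 ≤ ((0 - x)^2 + (0 - y)^2 + (Real.exp t - z)^2)/(2*z*Real.exp t) := by
      apply div_nonneg (by positivity)
      have := Real.exp_pos t
      nlinarith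
    show (1:ℝ) ≤ 1 + ((0 - x)^2 + (0 - y)^2 + (Real.exp t - z)^2)/(2*z*Real.exp t)
    linarith
  apply ciInf_le_of_le hbdd (Real.log N)
  rw [hgam, Real.exp_log hN0]
  show rho (x, y, z) (0, 0, N) ≤ R
  have hval : rho (x, y, z) (0, 0, N)
      = _root_.arcosh (1 + ((0 - x)^2 + (0 - y)^2 + (N - z)^2)/(2*z*N)) := rfl
  rw [hval]
  have hnum : (0 - x)^2 + (0 - y)^2 + (N - z)^2 = 2*N*(N - z) := by
    linear_combination -hN2
  have harg1 : 1 ≤ 1 + ((0 - x)^2 + (0 - y)^2 + (N - z)^2)/(2*z*N) := by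
    have : 0 ≤ ((0 - x)^2 + (0 - y)^2 + (N - z)^2)/(2*z*N) :=
      div_nonneg (by positivity) (by nlinarith)
    linarith
  have hargk : 1 + ((0 - x)^2 + (0 - y)^2 + (N - z)^2)/(2*z*N) ≤ k := by
    have h2 : 2*N*(N-z)/(2*z*N) ≤ k - 1 := by
      rw [div_le_iff₀ (by nlinarith : (0:ℝ) < 2*z*N)]
      nlinarith [hNz, hN0.le, hz0.le]
    rw [hnum]
    linarith
  exact my_arcosh_le _ R harg1 (by linarith) hargk

end
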